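/- Let (W,S) be a Coxeter system. For a word w on S, let N(w) be the set of elements of W that occur an odd number of times in the sequence (r_1(w), …, r_k(w)) of reflections of w. If two words w and w' on S represent the same element of W, then N(w) = N(w'). -/

import Mathlib

namespace OddReflAux

variable {W : Type*} [Group W] [DecidableEq W]

/-- Conjugation action of `W` on `Multiplicative (W → ZMod 2)`. -/
def conjEquiv (w : W) : Multiplicative (W → ZMod 2) ≃* Multiplicative (W → ZMod 2) :=
  AddEquiv.toMultiplicative
    { toFun := fun f u => f (w⁻¹ * u * w)
      invFun := fun f u => f (w * u * w⁻¹)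
      left_inv := fun f => by funext u; group
      right_inv := fun f => by funext u; group
      map_add' := fun f g => rfl }

def conjHom : W →* MulAut (Multiplicative (W → ZMod 2)) where
  toFun := conjEquiv
  map_one' := by
    ext f : 1
    apply Multiplicative.toAdd.injective
    funext u
    show f.toAdd ((1:W)⁻¹ * u * 1) = f.toAdd u
    rw [inv_one, one_mul, mul_one]
  map_mul' v w := by
    ext f : 1
    apply Multiplicative.toAdd.injective
    funext u
    show f.toAdd ((v * w)⁻¹ * u * (v * w)) = f.toAdd (w⁻¹ * (v⁻¹ * u * v) * w)
    group

lemma conjHom_apply (w : W) (f : Multiplicative (W → ZMod 2)) :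
    conjHom w f = Multiplicative.ofAdd (fun u => f.toAdd (w⁻¹ * u * w)) := rfl

lemma conjHom_single (w x : W) :
    (conjHom w (Multiplicative.ofAdd (Pi.single x (1 : ZMod 2))) : Multiplicative (W → ZMod 2))
      = Multiplicative.ofAdd (Pi.single (w * x * w⁻¹) (1 : ZMod 2)) := by
  rw [conjHom_apply]
  congr 1
  funext u
  simp only [toAdd_ofAdd]
  by_cases h : u = w * x * w⁻¹
  · subst h
    rw [Pi.single_eq_same]
    have h2 : w⁻¹ * (w * x * w⁻¹) * w = x := by group
    rw [h2, Pi.single_eq_same]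
  · rw [Pi.single_eq_of_ne, Pi.single_eq_of_ne h]
    intro hc
    apply h
    rw [← hc]; group

/-- Power formula in a semidirect product with abelian normal part. -/
lemma sdp_pow {N G : Type*} [CommGroup N] [Group G] {φ : G →* MulAut N}
    (a : N ⋊[φ] G) (m : ℕ) :
    a ^ m = ⟨∏ k ∈ Finset.range m, φ (a.right ^ k) a.left, a.right ^ m⟩ := by
  induction m with
  | zero => apply SemidirectProduct.ext <;> simp
  | succ n ih =>
    rw [pow_succ, ih, SemidirectProduct.mul_def]
    congr 1
    · rw [Finset.prod_range_succ]
    · rw [pow_succ]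

variable {B : Type*} {M : CoxeterMatrix B} (cs : CoxeterSystem M W)

/-- The generator images in the semidirect product. -/
def gen (i : B) : Multiplicative (W → ZMod 2) ⋊[conjHom] W :=
  ⟨Multiplicative.ofAdd (Pi.single (cs.simple i) (1 : ZMod 2)), cs.simple i⟩

lemma conj_pow (s t : W) (hs : s⁻¹ = s) (ht : t⁻¹ = t) (n : ℕ) :
    (s * t) ^ n * s * ((s * t) ^ n)⁻¹ = (s * t) ^ (2 * n) * s := by
  have hsr : s * (s * t)⁻¹ = (s * t) * s := by
    rw [mul_inv_rev, ht, hs, mul_assoc]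
  induction n with
  | zero => simp
  | succ k ih =>
    have h1 : (s * t) ^ (k + 1) * s * ((s * t) ^ (k + 1))⁻¹
        = (s * t) * ((s * t) ^ k * s * ((s * t) ^ k)⁻¹) * (s * t)⁻¹ := by
      rw [pow_succ' (s * t) k, mul_inv_rev]
      group
    rw [h1, ih]
    calc (s * t) * ((s * t) ^ (2 * k) * s) * (s * t)⁻¹
        = (s * t) ^ (2 * k + 1) * (s * (s * t)⁻¹) := by
          rw [pow_succ' (s * t) (2 * k)]; group
      _ = (s * t) ^ (2 * k + 1) * ((s * t) * s) := by rw [hsr]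
      _ = (s * t) ^ (2 * (k + 1)) * s := by
          rw [show 2 * (k + 1) = (2 * k + 1) + 1 by ring, pow_succ, pow_succ]
          simp [pow_succ, mul_assoc]

lemma gen_mul (i j : B) :
    gen cs i * gen cs j =
      ⟨Multiplicative.ofAdd (Pi.single (cs.simple i) (1 : ZMod 2) +
        Pi.single (cs.simple i * cs.simple j * cs.simple i) (1 : ZMod 2)),
        cs.simple i * cs.simple j⟩ := by
  rw [gen, gen, SemidirectProduct.mul_def]
  congr 1
  rw [conjHom_single, cs.inv_simple, ofAdd_add]

lemma liftable : M.IsLiftable (gen cs) := by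
  intro i j
  have hs : (cs.simple i)⁻¹ = cs.simple i := cs.inv_simple i
  have ht : (cs.simple j)⁻¹ = cs.simple j := cs.inv_simple j
  set s := cs.simple i with hsdef
  set t := cs.simple j with htdef
  have hρ : (s * t) ^ (M i j) = 1 := cs.simple_mul_simple_pow i j
  set g : ℕ → (W → ZMod 2) := fun n => Pi.single ((s * t) ^ n * s) (1 : ZMod 2) with hg
  have hb : ∀ k : ℕ, (s * t) ^ k * (s * t * s) * ((s * t) ^ k)⁻¹
      = (s * t) ^ (2 * k + 1) * s := by
    intro k
    have e1 : (s * t) ^ k * (s * t * s) * ((s * t) ^ k)⁻¹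
        = (s * t) * ((s * t) ^ k * s * ((s * t) ^ k)⁻¹) := by
      rw [show (s * t) ^ k * (s * t * s) = ((s * t) ^ k * (s * t)) * s by simp [mul_assoc],
        ← pow_succ, pow_succ']
      simp [mul_assoc]
    rw [e1, conj_pow s t hs ht k, ← mul_assoc, ← pow_succ']
  have claim2 : ∀ n : ℕ, ∑ k ∈ Finset.range n, (g (2 * k) + g (2 * k + 1))
      = ∑ k ∈ Finset.range (2 * n), g k := by
    intro n
    induction n with
    | zero => simp
    | succ p ih =>
      rw [Finset.sum_range_succ, ih, show 2 * (p + 1) = (2 * p + 1) + 1 by ring,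
        Finset.sum_range_succ, Finset.sum_range_succ, add_assoc]
  have claim3 : ∑ k ∈ Finset.range (2 * M i j), g k = 0 := by
    rw [two_mul, Finset.sum_range_add]
    have : ∀ k, g (M i j + k) = g k := by
      intro k
      rw [hg]
      simp only [pow_add, hρ, one_mul]
    simp only [this]
    funext u
    simp only [Pi.add_apply, Finset.sum_apply, Pi.zero_apply]
    exact CharTwo.add_self_eq_zero _
  show (gen cs i * gen cs j) ^ M i j = 1
  rw [gen_mul, sdp_pow]
  apply SemidirectProduct.ext
  · show _ = (1 : Multiplicative (W → ZMod 2))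
    calc ∏ k ∈ Finset.range (M i j),
        (conjHom ((s * t) ^ k)) (Multiplicative.ofAdd
          (Pi.single s (1 : ZMod 2) + Pi.single (s * t * s) (1 : ZMod 2)))
        = ∏ k ∈ Finset.range (M i j), Multiplicative.ofAdd (g (2 * k) + g (2 * k + 1)) := by
          apply Finset.prod_congr rfl
          intro k _
          rw [ofAdd_add, map_mul, conjHom_single, conjHom_single, conj_pow s t hs ht k, hb k,
            ← ofAdd_add]
      _ = Multiplicative.ofAdd (∑ k ∈ Finset.range (M i j), (g (2 * k) + g (2 * k + 1))) :=
          (ofAdd_sum _ _).symm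
      _ = 1 := by rw [claim2, claim3, ofAdd_zero]
  · show (s * t) ^ M i j = 1
    exact hρ

/-- The parity homomorphism. -/
def psi : W →* Multiplicative (W → ZMod 2) ⋊[conjHom] W :=
  cs.lift ⟨gen cs, liftable cs⟩

lemma psi_wordProd (w : List B) :
    psi cs (cs.wordProd w)
      = ⟨Multiplicative.ofAdd (fun u => ((cs.leftInvSeq w).count u : ZMod 2)),
          cs.wordProd w⟩ := by
  induction w with
  | nil =>
    rw [CoxeterSystem.wordProd_nil, map_one]
    apply SemidirectProduct.ext
    · show (1 : Multiplicative (W → ZMod 2)) = _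
      simp [CoxeterSystem.leftInvSeq_nil]
      rfl
    · rfl
  | cons i w ih =>
    rw [CoxeterSystem.wordProd_cons, map_mul, ih]
    have hgen : psi cs (cs.simple i) = gen cs i := CoxeterSystem.lift_apply_simple cs _ i
    rw [hgen, gen, SemidirectProduct.mul_def]
    apply SemidirectProduct.ext
    · show Multiplicative.ofAdd (Pi.single (cs.simple i) (1 : ZMod 2)) *
        conjHom (cs.simple i) (Multiplicative.ofAdd _) = _
      rw [conjHom_apply, ← ofAdd_add]
      congr 1
      funext u
      simp only [Pi.add_apply, toAdd_ofAdd]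
      rw [CoxeterSystem.leftInvSeq]
      rw [List.count_cons]
      have hmap : (List.map (⇑(MulAut.conj (cs.simple i))) (cs.leftInvSeq w)).count u
          = (cs.leftInvSeq w).count ((cs.simple i)⁻¹ * u * cs.simple i) := by
        have hinj : Function.Injective (⇑(MulAut.conj (cs.simple i))) :=
          (MulAut.conj (cs.simple i)).injective
        have hu : u = MulAut.conj (cs.simple i) ((cs.simple i)⁻¹ * u * cs.simple i) := by
          rw [MulAut.conj_apply, cs.inv_simple,
            show cs.simple i * (cs.simple i * u * cs.simple i) * cs.simple i
              = (cs.simple i * cs.simple i) * u * (cs.simple i * cs.simple i) by group,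
            cs.simple_mul_simple_self, one_mul, mul_one]
        nth_rewrite 1 [hu]
        rw [List.count_map_of_injective _ _ hinj]
      rw [hmap]
      push_cast
      rw [add_comm]
      congr 1
      · by_cases h : cs.simple i = u
        · subst h; simp
        · rw [Pi.single_eq_of_ne (Ne.symm h)]
          simp [h]
    · show cs.simple i * cs.wordProd w = _
      rfl

end OddReflAux

/-- For a word `w` on `S`, let `N(w)` be the set of elements of `W` occurring an odd number of
times among the reflections `r_1(w), …, r_k(w)` (the left inversion sequence).  If two words
represent the same element of `W`, then `N(w) = N(w')`. -/
theorem oddReflections_eq_of_wordProd_eq {B W : Type*} [Group W] [DecidableEq W]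
    {M : CoxeterMatrix B} (cs : CoxeterSystem M W) (w w' : List B)
    (h : cs.wordProd w = cs.wordProd w') :
    {u : W | Odd ((cs.leftInvSeq w).count u)} = {u : W | Odd ((cs.leftInvSeq w').count u)} := by
  have hpsi : OddReflAux.psi cs (cs.wordProd w) = OddReflAux.psi cs (cs.wordProd w') := by rw [h]
  rw [OddReflAux.psi_wordProd, OddReflAux.psi_wordProd] at hpsi
  have hleft := congrArg SemidirectProduct.left hpsi
  simp only at hleft
  have hfun := congrArg Multiplicative.toAdd hleft
  have hcount : ∀ u : W, (((cs.leftInvSeq w).count u : ZMod 2))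
      = ((cs.leftInvSeq w').count u : ZMod 2) := fun u => congrFun hfun u
  ext u
  simp only [Set.mem_setOf_eq]
  have := (ZMod.natCast_eq_natCast_iff _ _ _).mp (hcount u)
  rw [Nat.odd_iff, Nat.odd_iff, this]
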